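/- For every j with 0 ≤ j ≤ m, the j-th derivative of the two-point Hermite interpolant H_{m,n} at s = 0 satisfies H_{m,n}^{(j)}(0)/j! = p_j. -/

import Mathlib

noncomputable def blend (m n : ℕ) (p q : ℕ → ℝ) (s : ℝ) : ℝ :=
  (∑ j ∈ Finset.range (m + 1),
      (∑ k ∈ Finset.range (m - j + 1),
          ((n + k).choose k : ℝ) * s ^ (k + j) * (1 - s) ^ (n + 1)) * p j)
  + ∑ j ∈ Finset.range (n + 1),
      (∑ k ∈ Finset.range (n - j + 1),
          ((m + k).choose k : ℝ) * s ^ (m + 1) * (1 - s) ^ (k + j)) * (-1 : ℝ) ^ j * q j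

open Polynomial in
lemma coeff_one_sub_X_pow (e k : ℕ) : ((1 - Polynomial.X : Polynomial ℝ)^e).coeff k = (-1)^k * e.choose k := by
  rw [sub_eq_add_neg, add_comm, add_pow, Polynomial.finset_sum_coeff]
  have : ∀ i ∈ Finset.range (e+1), (((-X:ℝ[X])^i * 1^(e-i) * (e.choose i : ℝ[X]))).coeff k
      = if i = k then (-1:ℝ)^k * e.choose k else 0 := by
    intro i _
    have h2 : ((-X:ℝ[X])^i * 1^(e-i) * (e.choose i : ℝ[X])) = Polynomial.C ((-1:ℝ)^i * e.choose i) * X^i := by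
      rw [map_mul, map_pow, map_natCast, map_neg, map_one]
      ring
    rw [h2, Polynomial.coeff_C_mul, Polynomial.coeff_X_pow]
    rcases eq_or_ne i k with h | h
    · simp [h]
    · simp [h, Ne.symm h]
  rw [Finset.sum_congr rfl this, Finset.sum_ite_eq' (Finset.range (e+1)) k]
  split_ifs with h
  · rfl
  · have : e < k := by simpa using h
    simp [Nat.choose_eq_zero_of_lt this]

open PowerSeries in
lemma key (n d : ℕ) :
    (∑ k ∈ Finset.range (d+1), ((n+k).choose k : ℝ) * ((-1:ℝ)^(d-k) * ((n+1).choose (d-k)))) =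
      if d = 0 then 1 else 0 := by
  have hu : ((invOneSubPow ℝ (n+1)).val * (1 - PowerSeries.X)^(n+1) : ℝ⟦X⟧) = 1 := by
    rw [← invOneSubPow_inv_eq_one_sub_pow]
    exact (invOneSubPow ℝ (n+1)).val_inv
  have := congrArg (PowerSeries.coeff d) hu
  rw [PowerSeries.coeff_one, PowerSeries.coeff_mul,
    Finset.Nat.sum_antidiagonal_eq_sum_range_succ (fun a b =>
      (PowerSeries.coeff a) (invOneSubPow ℝ (n+1)).val *
      (PowerSeries.coeff b) ((1 - PowerSeries.X)^(n+1)))] at this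
  rw [← this]
  apply Finset.sum_congr rfl
  intro k hk
  rw [invOneSubPow_val_succ_eq_mk_add_choose, PowerSeries.coeff_mk]
  congr 1
  · norm_cast
    have h := Nat.choose_symm (Nat.le_add_right n k)
    have h2 : n + k - n = k := by omega
    rw [h2] at h
    omega
  · have hc : ((1 - PowerSeries.X : ℝ⟦X⟧)^(n+1)) = ((1 - Polynomial.X : Polynomial ℝ)^(n+1) : Polynomial ℝ) := by
      push_cast
      rfl
    rw [hc, Polynomial.coeff_coe, coeff_one_sub_X_pow]

noncomputable def blendPoly (m n : ℕ) (p q : ℕ → ℝ) : Polynomial ℝ :=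
  (∑ j ∈ Finset.range (m + 1),
      (∑ k ∈ Finset.range (m - j + 1),
          Polynomial.C ((n + k).choose k : ℝ) * Polynomial.X ^ (k + j)
            * (1 - Polynomial.X) ^ (n + 1)) * Polynomial.C (p j))
  + ∑ j ∈ Finset.range (n + 1),
      (∑ k ∈ Finset.range (n - j + 1),
          Polynomial.C ((m + k).choose k : ℝ) * Polynomial.X ^ (m + 1)
            * (1 - Polynomial.X) ^ (k + j)) * Polynomial.C ((-1 : ℝ) ^ j * q j)

lemma blend_eq_eval (m n : ℕ) (p q : ℕ → ℝ) (s : ℝ) :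
    blend m n p q s = (blendPoly m n p q).eval s := by
  unfold blend blendPoly
  simp only [Polynomial.eval_add, Polynomial.eval_finset_sum, Polynomial.eval_mul,
    Polynomial.eval_pow, Polynomial.eval_sub, Polynomial.eval_one, Polynomial.eval_X,
    Polynomial.eval_C]
  congr 1 <;> exact Finset.sum_congr rfl fun i _ => by ring

lemma blendPoly_coeff (m n : ℕ) (p q : ℕ → ℝ) (j : ℕ) (hj : j ≤ m) :
    (blendPoly m n p q).coeff j = p j := by
  unfold blendPoly
  rw [Polynomial.coeff_add, Polynomial.finset_sum_coeff, Polynomial.finset_sum_coeff]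
  have h2 : ∀ i ∈ Finset.range (n + 1),
      ((∑ k ∈ Finset.range (n - i + 1),
          Polynomial.C ((m + k).choose k : ℝ) * Polynomial.X ^ (m + 1)
            * (1 - Polynomial.X) ^ (k + i)) * Polynomial.C ((-1 : ℝ) ^ i * q i)).coeff j
        = 0 := by
    intro i _
    have hrw : (∑ k ∈ Finset.range (n - i + 1),
          Polynomial.C ((m + k).choose k : ℝ) * Polynomial.X ^ (m + 1)
            * (1 - Polynomial.X) ^ (k + i)) * Polynomial.C ((-1 : ℝ) ^ i * q i)
        = ((∑ k ∈ Finset.range (n - i + 1),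
            Polynomial.C ((m + k).choose k : ℝ) * (1 - Polynomial.X) ^ (k + i))
              * Polynomial.C ((-1 : ℝ) ^ i * q i)) * Polynomial.X ^ (m + 1) := by
      rw [Finset.sum_mul, Finset.sum_mul, Finset.sum_mul]
      exact Finset.sum_congr rfl fun k _ => by ring
    rw [hrw, Polynomial.coeff_mul_X_pow', if_neg (by omega)]
  rw [Finset.sum_congr rfl h2, Finset.sum_const_zero, add_zero]
  have h1 : ∀ i ∈ Finset.range (m + 1),
      ((∑ k ∈ Finset.range (m - i + 1),
          Polynomial.C ((n + k).choose k : ℝ) * Polynomial.X ^ (k + i)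
            * (1 - Polynomial.X) ^ (n + 1)) * Polynomial.C (p i)).coeff j
        = (if i = j then 1 else 0) * p i := by
    intro i hi
    rw [Polynomial.coeff_mul_C, Polynomial.finset_sum_coeff]
    congr 1
    have hterm : ∀ k ∈ Finset.range (m - i + 1),
        (Polynomial.C ((n + k).choose k : ℝ) * Polynomial.X ^ (k + i)
            * (1 - Polynomial.X) ^ (n + 1)).coeff j
          = if k + i ≤ j then
              ((n + k).choose k : ℝ) * ((-1:ℝ)^(j - i - k) * ((n+1).choose (j - i - k)))
            else 0 := by
      intro k _
      have : Polynomial.C ((n + k).choose k : ℝ) * Polynomial.X ^ (k + i)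
            * (1 - Polynomial.X) ^ (n + 1)
          = Polynomial.C ((n + k).choose k : ℝ) *
              ((1 - Polynomial.X) ^ (n + 1) * Polynomial.X ^ (k + i)) := by ring
      rw [this, Polynomial.coeff_C_mul, Polynomial.coeff_mul_X_pow']
      split_ifs with h
      · rw [coeff_one_sub_X_pow]
        have : j - (k + i) = j - i - k := by omega
        rw [this]
      · rw [mul_zero]
    rw [Finset.sum_congr rfl hterm]
    rcases le_or_gt i j with hij | hij
    · set d := j - i with hd
      have hcond : ∀ k ∈ Finset.range (m - i + 1),
          (if k + i ≤ j then
              ((n + k).choose k : ℝ) * ((-1:ℝ)^(j - i - k) * ((n+1).choose (j - i - k)))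
            else 0)
          = if k ∈ Finset.range (d + 1) then
              ((n + k).choose k : ℝ) * ((-1:ℝ)^(d - k) * ((n+1).choose (d - k)))
            else 0 := by
        intro k _
        have : (k + i ≤ j) ↔ k ∈ Finset.range (d + 1) := by
          simp only [Finset.mem_range]
          omega
        simp only [hd]
        split_ifs with ha hb hb
        · rfl
        · exact absurd (this.mp ha) hb
        · exact absurd (this.mpr hb) ha
        · rfl
      rw [Finset.sum_congr rfl hcond, Finset.sum_ite_mem]
      have hinter : Finset.range (m - i + 1) ∩ Finset.range (d + 1) = Finset.range (d + 1) := by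
        apply Finset.inter_eq_right.mpr
        apply Finset.range_subset_range.mpr
        omega
      rw [hinter, key n d]
      have : d = 0 ↔ i = j := by omega
      simp only [this]
    · have : ∀ k ∈ Finset.range (m - i + 1),
          (if k + i ≤ j then
              ((n + k).choose k : ℝ) * ((-1:ℝ)^(j - i - k) * ((n+1).choose (j - i - k)))
            else 0) = 0 := by
        intro k _
        rw [if_neg (by omega)]
      rw [Finset.sum_congr rfl this, Finset.sum_const_zero, if_neg (by omega)]
  rw [Finset.sum_congr rfl h1]
  have hfin : ∀ x ∈ Finset.range (m + 1), (if x = j then (1:ℝ) else 0) * p x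
      = if x = j then p j else 0 := by
    intro x _
    split_ifs with h <;> simp [h]
  rw [Finset.sum_congr rfl hfin, Finset.sum_ite_eq' (Finset.range (m+1)) j,
    if_pos (Finset.mem_range.mpr (by omega))]

lemma iteratedDeriv_polyEval (P : Polynomial ℝ) (j : ℕ) :
    iteratedDeriv j (fun s => P.eval s) = fun s => (Polynomial.derivative^[j] P).eval s := by
  induction j with
  | zero => simp
  | succ j ih =>
    rw [iteratedDeriv_succ, ih, Function.iterate_succ_apply']
    funext x
    exact Polynomial.deriv _

theorem blend_iteratedDeriv_zero (m n : ℕ) (p q : ℕ → ℝ) (j : ℕ) (hj : j ≤ m) :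
    iteratedDeriv j (blend m n p q) 0 / (Nat.factorial j : ℝ) = p j := by
  have he : blend m n p q = fun s => (blendPoly m n p q).eval s :=
    funext fun s => blend_eq_eval m n p q s
  rw [he, iteratedDeriv_polyEval]
  show Polynomial.eval 0 ((⇑Polynomial.derivative)^[j] (blendPoly m n p q)) / (j.factorial : ℝ)
      = p j
  rw [← Polynomial.coeff_zero_eq_eval_zero,
    Polynomial.coeff_iterate_derivative, zero_add, Nat.descFactorial_self,
    blendPoly_coeff m n p q j hj, nsmul_eq_mul]
  field_simp
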